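/- Let 0 < β ≤ 1, D > 0 and λ0 ∈ H(β,D) be bounded. There exists a constant C, depending only on β and D, such that for every integer L ≥ 0 and every bounded λ ∈ V_L (a dyadic histogram constant on each interval I^{L+1}_j): ess sup_{x∈[0,1]} |λ(x) − λ0(x)| ≤ C·(2^L·∫_0^1|λ − λ0| + 2^{−βL}), and the same upper bound (with a possibly different constant) holds with ℓ∞(λ, λ0) in place of the essential supremum norm. -/

import Mathlib

open MeasureTheory Real Set

noncomputable section

/-- The Haar mother wavelet `ψ = 1_{(0,1/2]} − 1_{(1/2,1]}`. -/
def haarMother (x : ℝ) : ℝ :=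
  (Set.Ioc (0:ℝ) (1/2)).indicator (fun _ => (1:ℝ)) x
    - (Set.Ioc (1/2:ℝ) 1).indicator (fun _ => (1:ℝ)) x

/-- The Haar wavelet `ψ_{lk}(x) = 2^{l/2} ψ(2^l x − k)`. -/
def haarPsi (l k : ℕ) (x : ℝ) : ℝ :=
  (2:ℝ) ^ ((l:ℝ) / 2) * haarMother ((2:ℝ) ^ l * x - k)

/-- The dyadic interval `I^l_k = (k 2^{−l}, (k+1) 2^{−l}]`. -/
def dyadicI (l k : ℕ) : Set ℝ := Set.Ioc ((k:ℝ) / 2 ^ l) (((k:ℝ) + 1) / 2 ^ l)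

/-- `f ∈ V_L`: `f` is constant on each dyadic interval `I^{L+1}_j`, `0 ≤ j < 2^{L+1}`. -/
def MemV (L : ℕ) (f : ℝ → ℝ) : Prop :=
  ∀ j < 2 ^ (L + 1), ∀ x ∈ dyadicI (L + 1) j, ∀ y ∈ dyadicI (L + 1) j, f x = f y

/-- The `L²`-orthogonal projection onto `V_L`: on each dyadic interval `I^{L+1}_j`,
`(P_L f)(x)` is the average `2^{L+1} ∫_{I^{L+1}_j} f`. -/
def dyadicProj (L : ℕ) (f : ℝ → ℝ) (x : ℝ) : ℝ :=
  (2:ℝ) ^ (L + 1) *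
    ∫ t in (((⌈(2:ℝ) ^ (L + 1) * x⌉ - 1 : ℤ) : ℝ) / 2 ^ (L + 1))..
        (((⌈(2:ℝ) ^ (L + 1) * x⌉ : ℤ) : ℝ) / 2 ^ (L + 1)), f t

/-- The multiscale metric
`ℓ∞(f,g) = |⟨f−g, φ⟩| + Σ_{l≥0} 2^{l/2} max_{0≤k<2^l} |⟨f−g, ψ_{lk}⟩|`. -/
def ellInfinity (f g : ℝ → ℝ) : ℝ :=
  |∫ x in (0:ℝ)..1, (f x - g x)| +
    ∑' l : ℕ, (2:ℝ) ^ ((l:ℝ) / 2) *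
      ⨆ k : Fin (2 ^ l), |∫ x in (0:ℝ)..1, (f x - g x) * haarPsi l k x|

/-- The Hölder ball `H(β,D)` on `[0,1]` (for `0 < β ≤ 1`). -/
def HolderC (β D : ℝ) (f : ℝ → ℝ) : Prop :=
  ∀ x ∈ Set.Icc (0:ℝ) 1, ∀ y ∈ Set.Icc (0:ℝ) 1, |f x - f y| ≤ D * |x - y| ^ β

/-- Supremum-norm bound for histograms close to a Hölder function in `L¹`:
for `λ0 ∈ H(β,D)` (`0 < β ≤ 1`) and any dyadic histogram `λ ∈ V_L`,
`‖λ − λ0‖_∞ ≲ 2^L ‖λ − λ0‖_1 + 2^{−βL}`, both for the essential supremum on `[0,1]` and for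
the multiscale metric `ℓ∞`. -/
lemma abs_haarMother_le (x : ℝ) : |haarMother x| ≤ 1 := by
  unfold haarMother
  rw [Set.indicator_apply, Set.indicator_apply]
  split_ifs <;> norm_num
lemma measurable_haarMother : Measurable haarMother := by
  unfold haarMother
  exact ((measurable_const.indicator measurableSet_Ioc).sub
    (measurable_const.indicator measurableSet_Ioc))
lemma measurable_haarPsi (l k : ℕ) : Measurable (haarPsi l k) := by
  unfold haarPsi
  exact measurable_const.mul (measurable_haarMother.comp ((measurable_const.mul measurable_id).sub measurable_const))
lemma abs_haarPsi_le (l k : ℕ) (x : ℝ) : |haarPsi l k x| ≤ (2:ℝ) ^ ((l:ℝ)/2) := by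
  unfold haarPsi
  rw [abs_mul, abs_of_pos (by positivity)]
  calc (2:ℝ)^((l:ℝ)/2) * |haarMother (2^l*x - k)| ≤ (2:ℝ)^((l:ℝ)/2) * 1 :=
        mul_le_mul_of_nonneg_left (abs_haarMother_le _) (by positivity)
    _ = _ := mul_one _
lemma holder_continuousOn {β D : ℝ} (hβ : 0 < β) (hD : 0 < D) {f : ℝ → ℝ}
    (hf : HolderC β D f) : ContinuousOn f (Set.Icc 0 1) := by
  rw [Metric.continuousOn_iff]
  intro x hx ε hε
  refine ⟨(ε/(2*D)) ^ (1/β), by positivity, fun y hy hdist => ?_⟩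
  have h1 : |f y - f x| ≤ D * |y - x| ^ β := hf y hy x hx
  have h3 : (((ε/(2*D)) ^ (1/β) : ℝ)) ^ β = ε/(2*D) := by
    rw [← Real.rpow_mul (by positivity), one_div_mul_cancel hβ.ne', Real.rpow_one]
  have h2 : |y - x| ^ β < ε/(2*D) := by
    rw [← h3]
    exact Real.rpow_lt_rpow (abs_nonneg _) (by rwa [Real.dist_eq] at hdist) hβ
  rw [Real.dist_eq]
  calc |f y - f x| ≤ D * |y - x| ^ β := h1
    _ < D * (ε/(2*D)) := mul_lt_mul_of_pos_left h2 hD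
    _ < ε := by rw [mul_div_assoc'] ; rw [div_lt_iff₀ (by positivity)]; nlinarith
lemma dyadicI_subset_Ioc {l k : ℕ} (hk : k < 2^l) : dyadicI l k ⊆ Set.Ioc (0:ℝ) 1 := by
  unfold dyadicI
  apply Set.Ioc_subset_Ioc
  · positivity
  · rw [div_le_one (by positivity)]
    have : (k:ℝ) + 1 ≤ (2:ℝ)^l := by
      have : ((k+1 : ℕ) : ℝ) ≤ ((2^l : ℕ) : ℝ) := Nat.cast_le.mpr hk
      push_cast at this; linarith
    linarith
lemma exists_dyadic_index (L : ℕ) {x : ℝ} (hx : x ∈ Set.Ioc (0:ℝ) 1) :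
    ∃ j < 2^(L+1), x ∈ dyadicI (L+1) j := by
  set n : ℤ := ⌈(2:ℝ)^(L+1) * x⌉ with hn
  have hpos : (0:ℝ) < (2:ℝ)^(L+1) * x := by
    have := hx.1; positivity
  have hn1 : 1 ≤ n := Int.ceil_pos.mpr hpos
  have hn2 : n ≤ 2^(L+1) := by
    apply Int.ceil_le.mpr
    push_cast
    calc (2:ℝ)^(L+1) * x ≤ (2:ℝ)^(L+1) * 1 := by
          exact mul_le_mul_of_nonneg_left hx.2 (by positivity)
      _ = (2:ℝ)^(L+1) := mul_one _
  have hn2' : n ≤ ((2^(L+1) : ℕ) : ℤ) := by exact_mod_cast hn2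
  refine ⟨(n-1).toNat, ?_, ?_, ?_⟩
  · omega
  · have hc : (((n-1).toNat : ℤ) : ℝ) = (n:ℝ) - 1 := by
      have : ((n-1).toNat : ℤ) = n - 1 := Int.toNat_of_nonneg (by omega)
      rw [this]; push_cast; ring
    rw [div_lt_iff₀ (by positivity)]
    push_cast
    rw [show (((n-1).toNat : ℕ) : ℝ) = (n:ℝ) - 1 by exact_mod_cast hc]
    have := Int.ceil_lt_add_one ((2:ℝ)^(L+1) * x)
    rw [← hn] at this
    rw [mul_comm]
    linarith
  · rw [le_div_iff₀ (by positivity)]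
    push_cast
    have hc : (((n-1).toNat : ℕ) : ℝ) = (n:ℝ) - 1 := by
      have : ((n-1).toNat : ℤ) = n - 1 := Int.toNat_of_nonneg (by omega)
      exact_mod_cast congrArg (fun z : ℤ => (z:ℝ)) this
    rw [hc]
    have := Int.le_ceil ((2:ℝ)^(L+1) * x)
    rw [← hn] at this
    rw [mul_comm]
    linarith
lemma right_endpoint_mem (l j : ℕ) : (((j:ℝ)+1)/2^l) ∈ dyadicI l j := by
  constructor
  · apply div_lt_div_of_pos_right (by linarith) (by positivity)
  · exact le_refl _
lemma memV_integrableOn {L : ℕ} {lam : ℝ → ℝ} (hm : Measurable lam) (hV : MemV L lam) :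
    IntegrableOn lam (Set.Ioc (0:ℝ) 1) := by
  have hne : (Finset.range (2^(L+1))).Nonempty := by
    apply Finset.nonempty_range_iff.mpr; positivity
  set B : ℝ := (Finset.range (2^(L+1))).sup' hne
      (fun j => |lam (((j:ℝ)+1)/2^(L+1))|) with hB
  apply Measure.integrableOn_of_bounded (M := B) measure_Ioc_lt_top.ne hm.aestronglyMeasurable
  rw [ae_restrict_iff' measurableSet_Ioc]
  apply ae_of_all
  intro x hx
  obtain ⟨j, hj, hxj⟩ := exists_dyadic_index L hx
  have hval : lam x = lam (((j:ℝ)+1)/2^(L+1)) :=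
    hV j hj x hxj _ (right_endpoint_mem (L+1) j)
  rw [Real.norm_eq_abs, hval]
  exact Finset.le_sup' (fun j : ℕ => |lam (((j:ℝ)+1)/2^(L+1))|) (Finset.mem_range.mpr hj)
lemma haarPsi_eq_indicator (l k : ℕ) (x : ℝ) :
    haarPsi l k x = (2:ℝ)^((l:ℝ)/2) *
      ((Set.Ioc ((k:ℝ)/2^l) (((k:ℝ)+1/2)/2^l)).indicator (fun _ => (1:ℝ)) x
        - (Set.Ioc (((k:ℝ)+1/2)/2^l) (((k:ℝ)+1)/2^l)).indicator (fun _ => (1:ℝ)) x) := by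
  unfold haarPsi haarMother
  congr 1
  have hp : (0:ℝ) < 2^l := by positivity
  have e1 : ((2:ℝ)^l * x - k ∈ Set.Ioc (0:ℝ) (1/2)) ↔ x ∈ Set.Ioc ((k:ℝ)/2^l) (((k:ℝ)+1/2)/2^l) := by
    simp only [Set.mem_Ioc]
    rw [div_lt_iff₀ hp, le_div_iff₀ hp]
    constructor <;> intro h <;> constructor <;> nlinarith [h.1, h.2]
  have e2 : ((2:ℝ)^l * x - k ∈ Set.Ioc (1/2:ℝ) 1) ↔ x ∈ Set.Ioc (((k:ℝ)+1/2)/2^l) (((k:ℝ)+1)/2^l) := by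
    simp only [Set.mem_Ioc]
    rw [div_lt_iff₀ hp, le_div_iff₀ hp]
    constructor <;> intro h <;> constructor <;> nlinarith [h.1, h.2]
  rw [Set.indicator_apply, Set.indicator_apply, Set.indicator_apply, Set.indicator_apply]
  rw [if_congr e1 rfl rfl, if_congr e2 rfl rfl]
lemma integral_mul_haarPsi {g : ℝ → ℝ} (hg : IntegrableOn g (Set.Ioc (0:ℝ) 1))
    (l k : ℕ) (hk : k < 2^l) :
    ∫ x in (0:ℝ)..1, g x * haarPsi l k x
      = (2:ℝ)^((l:ℝ)/2) *
        ((∫ x in Set.Ioc ((k:ℝ)/2^l) (((k:ℝ)+1/2)/2^l), g x)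
          - ∫ x in Set.Ioc (((k:ℝ)+1/2)/2^l) (((k:ℝ)+1)/2^l), g x) := by
  have hp : (0:ℝ) < 2^l := by positivity
  have hk1 : (k:ℝ) + 1 ≤ 2^l := by
    have : ((k+1 : ℕ) : ℝ) ≤ ((2^l : ℕ) : ℝ) := Nat.cast_le.mpr hk
    push_cast at this; linarith
  have hsub1 : Set.Ioc ((k:ℝ)/2^l) (((k:ℝ)+1/2)/2^l) ⊆ Set.Ioc (0:ℝ) 1 := by
    apply Set.Ioc_subset_Ioc
    · positivity
    · rw [div_le_one hp]; linarith
  have hsub2 : Set.Ioc (((k:ℝ)+1/2)/2^l) (((k:ℝ)+1)/2^l) ⊆ Set.Ioc (0:ℝ) 1 := by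
    apply Set.Ioc_subset_Ioc
    · positivity
    · rw [div_le_one hp]; linarith
  rw [intervalIntegral.integral_of_le (by norm_num : (0:ℝ) ≤ 1)]
  have key : ∀ x, g x * haarPsi l k x
      = (2:ℝ)^((l:ℝ)/2) * ((Set.Ioc ((k:ℝ)/2^l) (((k:ℝ)+1/2)/2^l)).indicator g x
          - (Set.Ioc (((k:ℝ)+1/2)/2^l) (((k:ℝ)+1)/2^l)).indicator g x) := by
    intro x
    rw [haarPsi_eq_indicator]
    rw [Set.indicator_apply, Set.indicator_apply, Set.indicator_apply, Set.indicator_apply]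
    split_ifs <;> ring
  simp only [key]
  rw [MeasureTheory.integral_const_mul]
  congr 1
  rw [integral_sub ((hg.mono_set hsub1).integrable_indicator measurableSet_Ioc).integrableOn
      ((hg.mono_set hsub2).integrable_indicator measurableSet_Ioc).integrableOn]
  congr 1
  · rw [setIntegral_indicator measurableSet_Ioc, Set.inter_eq_self_of_subset_right hsub1]
  · rw [setIntegral_indicator measurableSet_Ioc, Set.inter_eq_self_of_subset_right hsub2]
lemma dyadic_nested {L l k : ℕ} (hl : L + 1 ≤ l) (hk : k < 2^l) :
    ∃ j < 2^(L+1), dyadicI l k ⊆ dyadicI (L+1) j := by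
  set m : ℕ := 2^(l - (L+1)) with hm
  have hml : 2^(L+1) * m = 2^l := by
    rw [hm, ← pow_add]; congr 1; omega
  refine ⟨k / m, ?_, ?_⟩
  · have hmpos : 0 < m := by positivity
    rw [Nat.div_lt_iff_lt_mul hmpos]
    calc k < 2^l := hk
      _ = 2^(L+1) * m := hml.symm
  · have h1 : (k / m) * m ≤ k := Nat.div_mul_le_self k m
    have h2 : k < (k / m + 1) * m := by
      have hmpos : 0 < m := by positivity
      calc k < k / m * m + m := Nat.lt_div_mul_add hmpos
        _ = (k / m + 1) * m := by ring
    have hq2 : k + 1 ≤ (k / m + 1) * m := h2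
    unfold dyadicI
    apply Set.Ioc_subset_Ioc
    · -- (k/m : ℝ)/2^(L+1) ≤ k/2^l
      rw [div_le_div_iff₀ (by positivity) (by positivity)]
      have hc : ((k/m : ℕ) : ℝ) * ((m:ℕ) : ℝ) ≤ (k : ℝ) := by exact_mod_cast h1
      have hml' : ((2:ℝ)^(L+1)) * (m : ℝ) = (2:ℝ)^l := by exact_mod_cast hml
      nlinarith [show (0:ℝ) < (m:ℝ) by positivity, show (0:ℝ) < (2:ℝ)^(L+1) by positivity]
    · rw [div_le_div_iff₀ (by positivity) (by positivity)]
      have hc : (k : ℝ) + 1 ≤ (((k/m : ℕ) : ℝ) + 1) * ((m:ℕ) : ℝ) := by exact_mod_cast hq2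
      have hml' : ((2:ℝ)^(L+1)) * (m : ℝ) = (2:ℝ)^l := by exact_mod_cast hml
      nlinarith [show (0:ℝ) < (m:ℝ) by positivity, show (0:ℝ) < (2:ℝ)^(L+1) by positivity]
lemma const_on_dyadic_integral {lam : ℝ → ℝ} {s : Set ℝ} {v : ℝ} {a b : ℝ}
    (hab : a ≤ b) (hs : Set.Ioc a b ⊆ s) (hconst : ∀ x ∈ s, lam x = v) :
    ∫ x in Set.Ioc a b, lam x = (b - a) * v := by
  rw [setIntegral_congr_fun measurableSet_Ioc (fun x hx => hconst x (hs hx))]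
  rw [setIntegral_const, Real.volume_real_Ioc_of_le (by linarith), smul_eq_mul]
lemma high_freq_bound {β D : ℝ} (hβ : 0 < β) (hD : 0 < D)
    {lam0 : ℝ → ℝ} (h0 : HolderC β D lam0) (h0i : IntegrableOn lam0 (Set.Icc (0:ℝ) 1))
    {L : ℕ} {lam : ℝ → ℝ} (hm : Measurable lam) (hV : MemV L lam)
    {l k : ℕ} (hl : L + 1 ≤ l) (hk : k < 2^l) :
    |∫ x in (0:ℝ)..1, (lam x - lam0 x) * haarPsi l k x|
      ≤ (2:ℝ)^((l:ℝ)/2) * (D * (1/(2*2^l)) ^ β * (1/(2*2^l))) := by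
  have hp : (0:ℝ) < 2^l := by positivity
  set h : ℝ := 1/(2*2^l) with hh
  have hhpos : 0 < h := by positivity
  set c : ℝ := (k:ℝ)/2^l with hc
  have hm1 : ((k:ℝ)+1/2)/2^l = c + h := by rw [hc, hh]; field_simp
  have hd1 : ((k:ℝ)+1)/2^l = c + h + h := by rw [hc, hh]; field_simp; ring
  have hk1 : (k:ℝ) + 1 ≤ 2^l := by
    have : ((k+1 : ℕ) : ℝ) ≤ ((2^l : ℕ) : ℝ) := Nat.cast_le.mpr hk
    push_cast at this; linarith
  have hc0 : 0 ≤ c := by positivity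
  have hd1' : c + h + h ≤ 1 := by
    rw [← hd1, div_le_one hp]; linarith
  -- integrability of f on Ioc 0 1
  have h0i' : IntegrableOn lam0 (Set.Ioc (0:ℝ) 1) := h0i.mono_set Set.Ioc_subset_Icc_self
  have hfi : IntegrableOn (fun x => lam x - lam0 x) (Set.Ioc (0:ℝ) 1) :=
    (memV_integrableOn hm hV).sub h0i'
  rw [integral_mul_haarPsi hfi l k hk]
  rw [abs_mul, abs_of_pos (show (0:ℝ) < (2:ℝ)^((l:ℝ)/2) by positivity)]
  apply mul_le_mul_of_nonneg_left _ (by positivity)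
  -- lam is constant on dyadicI l k
  obtain ⟨j, hj, hsubj⟩ := dyadic_nested hl hk
  set v : ℝ := lam (((j:ℝ)+1)/2^(L+1)) with hv
  have hconst : ∀ x ∈ dyadicI l k, lam x = v := fun x hx =>
    hV j hj x (hsubj hx) _ (right_endpoint_mem (L+1) j)
  have hIlk : dyadicI l k = Set.Ioc c (c + h + h) := by rw [dyadicI, ← hc, ← hd1]
  -- split integrals
  have hs1 : Set.Ioc c (c+h) ⊆ Set.Ioc (0:ℝ) 1 :=
    Set.Ioc_subset_Ioc hc0 (by linarith)
  have hs2 : Set.Ioc (c+h) (c+h+h) ⊆ Set.Ioc (0:ℝ) 1 :=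
    Set.Ioc_subset_Ioc (by linarith) hd1'
  have hint1lam : ∫ x in Set.Ioc c (c+h), lam x = h * v := by
    have := const_on_dyadic_integral (s := dyadicI l k) (a := c) (b := c+h)
      (by linarith) (by rw [hIlk]; exact Set.Ioc_subset_Ioc le_rfl (by linarith)) hconst
    rw [this]; ring_nf
  have hint2lam : ∫ x in Set.Ioc (c+h) (c+h+h), lam x = h * v := by
    have := const_on_dyadic_integral (s := dyadicI l k) (a := c+h) (b := c+h+h)
      (by linarith) (by rw [hIlk]; exact Set.Ioc_subset_Ioc (by linarith) le_rfl) hconst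
    rw [this]; ring_nf
  have hsplit1 : ∫ x in Set.Ioc c (c+h), (lam x - lam0 x)
      = h * v - ∫ x in Set.Ioc c (c+h), lam0 x := by
    rw [integral_sub ((memV_integrableOn hm hV).mono_set hs1) (h0i'.mono_set hs1), hint1lam]
  have hsplit2 : ∫ x in Set.Ioc (c+h) (c+h+h), (lam x - lam0 x)
      = h * v - ∫ x in Set.Ioc (c+h) (c+h+h), lam0 x := by
    rw [integral_sub ((memV_integrableOn hm hV).mono_set hs2) (h0i'.mono_set hs2), hint2lam]
  rw [hm1, hd1, hsplit1, hsplit2]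
  have hgoal : (h * v - ∫ x in Set.Ioc c (c+h), lam0 x)
      - (h * v - ∫ x in Set.Ioc (c+h) (c+h+h), lam0 x)
      = (∫ x in Set.Ioc (c+h) (c+h+h), lam0 x) - ∫ x in Set.Ioc c (c+h), lam0 x := by ring
  rw [hgoal]
  -- now the Hölder translation bound
  have hii1 : IntervalIntegrable lam0 volume c (c+h) := by
    rw [intervalIntegrable_iff_integrableOn_Ioc_of_le (by linarith)]
    exact h0i'.mono_set hs1
  have hii2 : IntervalIntegrable lam0 volume (c+h) (c+h+h) := by
    rw [intervalIntegrable_iff_integrableOn_Ioc_of_le (by linarith)]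
    exact h0i'.mono_set hs2
  have e1 : ∫ x in Set.Ioc c (c+h), lam0 x = ∫ x in c..(c+h), lam0 x :=
    (intervalIntegral.integral_of_le (by linarith)).symm
  have e2 : ∫ x in Set.Ioc (c+h) (c+h+h), lam0 x = ∫ x in (c+h)..(c+h+h), lam0 x :=
    (intervalIntegral.integral_of_le (by linarith)).symm
  have etrans : ∫ x in (c+h)..(c+h+h), lam0 x = ∫ x in c..(c+h), lam0 (x + h) := by
    rw [intervalIntegral.integral_comp_add_right]
  have hii2' : IntervalIntegrable (fun x => lam0 (x + h)) volume c (c+h) := by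
    have := hii2.comp_add_right h
    simpa using this
  rw [e1, e2, etrans, ← intervalIntegral.integral_sub hii2' hii1]
  calc |∫ x in c..(c+h), (lam0 (x + h) - lam0 x)|
      ≤ ∫ x in c..(c+h), |lam0 (x + h) - lam0 x| :=
        intervalIntegral.abs_integral_le_integral_abs (by linarith)
    _ ≤ ∫ _x in c..(c+h), D * h ^ β := by
        apply intervalIntegral.integral_mono_on (by linarith) (hii2'.sub hii1).abs
          intervalIntegrable_const
        intro x hx
        have hx01 : x ∈ Set.Icc (0:ℝ) 1 := ⟨by linarith [hx.1], by linarith [hx.2]⟩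
        have hxh01 : x + h ∈ Set.Icc (0:ℝ) 1 := ⟨by linarith [hx.1], by linarith [hx.2]⟩
        have := h0 (x + h) hxh01 x hx01
        simpa [abs_of_pos hhpos] using this
    _ = D * h ^ β * h := by rw [intervalIntegral.integral_const, smul_eq_mul]; ring
lemma low_freq_bound {g : ℝ → ℝ} (hg : IntegrableOn g (Set.Ioc (0:ℝ) 1)) (l k : ℕ) :
    |∫ x in (0:ℝ)..1, g x * haarPsi l k x|
      ≤ (2:ℝ)^((l:ℝ)/2) * ∫ x in (0:ℝ)..1, |g x| := by
  have hprod : IntegrableOn (fun x => g x * haarPsi l k x) (Set.Ioc (0:ℝ) 1) := by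
    have : Integrable (fun x => haarPsi l k x * g x) (volume.restrict (Set.Ioc (0:ℝ) 1)) :=
      hg.bdd_mul (measurable_haarPsi l k).aestronglyMeasurable
        (c := (2:ℝ)^((l:ℝ)/2)) (ae_of_all _ fun x => by rw [Real.norm_eq_abs]; exact abs_haarPsi_le l k x)
    exact this.congr (ae_of_all _ fun x => mul_comm _ _)
  have hii : IntervalIntegrable (fun x => g x * haarPsi l k x) volume 0 1 := by
    rw [intervalIntegrable_iff_integrableOn_Ioc_of_le (by norm_num)]; exact hprod
  have hgii : IntervalIntegrable (fun x => |g x|) volume 0 1 := by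
    rw [intervalIntegrable_iff_integrableOn_Ioc_of_le (by norm_num)]; exact hg.abs
  calc |∫ x in (0:ℝ)..1, g x * haarPsi l k x|
      ≤ ∫ x in (0:ℝ)..1, |g x * haarPsi l k x| :=
        intervalIntegral.abs_integral_le_integral_abs (by norm_num)
    _ ≤ ∫ x in (0:ℝ)..1, (2:ℝ)^((l:ℝ)/2) * |g x| := by
        apply intervalIntegral.integral_mono_on (by norm_num) hii.abs
          (hgii.const_mul _)
        intro x _
        rw [abs_mul, mul_comm]
        exact mul_le_mul_of_nonneg_right (abs_haarPsi_le l k x) (abs_nonneg _)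
    _ = (2:ℝ)^((l:ℝ)/2) * ∫ x in (0:ℝ)..1, |g x| := by
        rw [← intervalIntegral.integral_const_mul]
lemma pointwise_bound {β D : ℝ} (hβ : 0 < β) (hD : 0 < D) {lam0 : ℝ → ℝ} (h0 : HolderC β D lam0)
    (h0i : IntegrableOn lam0 (Set.Icc (0:ℝ) 1))
    {L : ℕ} {lam : ℝ → ℝ} (hm : Measurable lam) (hV : MemV L lam)
    {x : ℝ} (hx : x ∈ Set.Ioc (0:ℝ) 1) :
    |lam x - lam0 x| ≤ (2:ℝ)^(L+1) * (∫ t in (0:ℝ)..1, |lam t - lam0 t|)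
        + D * ((2:ℝ)^(L+1))⁻¹ ^ β := by
  have h0i' : IntegrableOn lam0 (Set.Ioc (0:ℝ) 1) := h0i.mono_set Set.Ioc_subset_Icc_self
  have hfi : IntegrableOn (fun t => |lam t - lam0 t|) (Set.Ioc (0:ℝ) 1) :=
    ((memV_integrableOn hm hV).sub h0i').abs
  obtain ⟨j, hj, hxj⟩ := exists_dyadic_index L hx
  set a : ℝ := (j:ℝ)/2^(L+1) with ha
  set b : ℝ := ((j:ℝ)+1)/2^(L+1) with hb
  have hr : b - a = ((2:ℝ)^(L+1))⁻¹ := by rw [ha, hb]; field_simp; ring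
  have hab : a < b := by rw [ha, hb]; apply div_lt_div_of_pos_right (by linarith) (by positivity)
  have hsub : Set.Ioc a b ⊆ Set.Ioc (0:ℝ) 1 := dyadicI_subset_Ioc hj
  have hkey : ∀ y ∈ Set.Ioc a b, |lam x - lam0 x| ≤ |lam y - lam0 y| + D * ((2:ℝ)^(L+1))⁻¹ ^ β := by
    intro y hy
    have hlxy : lam x = lam y := hV j hj x hxj y hy
    have hx01 : x ∈ Set.Icc (0:ℝ) 1 := ⟨hx.1.le, hx.2⟩
    have hy01 : y ∈ Set.Icc (0:ℝ) 1 := ⟨(hsub hy).1.le, (hsub hy).2⟩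
    have hxj' : x ∈ Set.Ioc a b := hxj
    have hxy : |x - y| ≤ ((2:ℝ)^(L+1))⁻¹ := by
      rw [← hr, abs_le]
      constructor
      · have h1 := hxj'.1; have h2 := hy.2; linarith
      · have h1 := hxj'.2; have h2 := hy.1; linarith
    have hH : |lam0 y - lam0 x| ≤ D * ((2:ℝ)^(L+1))⁻¹ ^ β := by
      calc |lam0 y - lam0 x| ≤ D * |y - x| ^ β := h0 y hy01 x hx01
        _ ≤ D * ((2:ℝ)^(L+1))⁻¹ ^ β := by
            apply mul_le_mul_of_nonneg_left _ (by positivity)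
            apply Real.rpow_le_rpow (abs_nonneg _) _ hβ.le
            rwa [abs_sub_comm]
    calc |lam x - lam0 x| = |(lam y - lam0 y) + (lam0 y - lam0 x)| := by rw [hlxy]; ring_nf
      _ ≤ |lam y - lam0 y| + |lam0 y - lam0 x| := abs_add_le _ _
      _ ≤ |lam y - lam0 y| + D * ((2:ℝ)^(L+1))⁻¹ ^ β := by linarith
  -- integrate over Ioc a b
  have hconst : ∫ _y in Set.Ioc a b, |lam x - lam0 x| = (b - a) * |lam x - lam0 x| := by
    rw [setIntegral_const, Real.volume_real_Ioc_of_le (by linarith), smul_eq_mul]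
  have hmono : ∫ _y in Set.Ioc a b, |lam x - lam0 x|
      ≤ ∫ y in Set.Ioc a b, (|lam y - lam0 y| + D * ((2:ℝ)^(L+1))⁻¹ ^ β) := by
    apply setIntegral_mono_on (integrableOn_const measure_Ioc_lt_top.ne)
      ((hfi.mono_set hsub).add (integrableOn_const measure_Ioc_lt_top.ne))
      measurableSet_Ioc hkey
  have hsplit : ∫ y in Set.Ioc a b, (|lam y - lam0 y| + D * ((2:ℝ)^(L+1))⁻¹ ^ β)
      = (∫ y in Set.Ioc a b, |lam y - lam0 y|) + (b - a) * (D * ((2:ℝ)^(L+1))⁻¹ ^ β) := by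
    rw [integral_add (hfi.mono_set hsub) (integrableOn_const measure_Ioc_lt_top.ne)]
    rw [setIntegral_const, Real.volume_real_Ioc_of_le (by linarith), smul_eq_mul]
  have hmono2 : ∫ y in Set.Ioc a b, |lam y - lam0 y| ≤ ∫ t in (0:ℝ)..1, |lam t - lam0 t| := by
    rw [intervalIntegral.integral_of_le (by norm_num)]
    apply setIntegral_mono_set hfi (ae_of_all _ fun y => abs_nonneg _)
      (HasSubset.Subset.eventuallyLE hsub)
  have hba : (0:ℝ) < b - a := by linarith
  have hfin : (b - a) * |lam x - lam0 x|
      ≤ (∫ t in (0:ℝ)..1, |lam t - lam0 t|) + (b - a) * (D * ((2:ℝ)^(L+1))⁻¹ ^ β) := by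
    rw [← hconst]; calc ∫ _y in Set.Ioc a b, |lam x - lam0 x| ≤ _ := hmono
      _ = _ := hsplit
      _ ≤ _ := by linarith
  have hrw : |lam x - lam0 x| = (b-a)⁻¹ * ((b-a) * |lam x - lam0 x|) := by
    rw [← mul_assoc, inv_mul_cancel₀ hba.ne', one_mul]
  have h2 : |lam x - lam0 x| ≤ (b - a)⁻¹ * (∫ t in (0:ℝ)..1, |lam t - lam0 t|)
      + D * ((2:ℝ)^(L+1))⁻¹ ^ β := by
    rw [hrw]
    calc (b-a)⁻¹ * ((b-a) * |lam x - lam0 x|)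
        ≤ (b-a)⁻¹ * ((∫ t in (0:ℝ)..1, |lam t - lam0 t|) + (b-a) * (D * ((2:ℝ)^(L+1))⁻¹ ^ β)) :=
          mul_le_mul_of_nonneg_left hfin (by positivity)
      _ = (b-a)⁻¹ * (∫ t in (0:ℝ)..1, |lam t - lam0 t|) + D * ((2:ℝ)^(L+1))⁻¹ ^ β := by
          rw [mul_add]
          congr 1
          rw [← mul_assoc, inv_mul_cancel₀ hba.ne', one_mul]
  rw [hr] at h2
  rwa [inv_inv] at h2
lemma rpow_half_sq (l : ℕ) : (2:ℝ)^((l:ℝ)/2) * (2:ℝ)^((l:ℝ)/2) = (2:ℝ)^l := by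
  rw [← Real.rpow_add (by norm_num), add_halves, Real.rpow_natCast]
lemma h_eq_rpow (l : ℕ) : (1/(2*2^l) : ℝ) = (2:ℝ)^(-((l:ℝ)+1)) := by
  rw [Real.rpow_neg (by norm_num), Real.rpow_add (by norm_num), Real.rpow_one,
    Real.rpow_natCast, one_div, mul_comm]

theorem sup_norm_bound_from_L1
    (β D : ℝ) (hβ : 0 < β) (hβ1 : β ≤ 1) (hD : 0 < D) :
    ∃ C : ℝ, 0 < C ∧
      ∀ lam0 : ℝ → ℝ, HolderC β D lam0 →
      ∀ L : ℕ, ∀ lam : ℝ → ℝ, Measurable lam → MemV L lam →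
        essSup (fun x => |lam x - lam0 x|) (volume.restrict (Set.Ioc (0:ℝ) 1))
            ≤ C * ((2:ℝ) ^ L * (∫ x in (0:ℝ)..1, |lam x - lam0 x|)
                + (2:ℝ) ^ (-(β * (L:ℝ)))) ∧
        ellInfinity lam lam0
            ≤ C * ((2:ℝ) ^ L * (∫ x in (0:ℝ)..1, |lam x - lam0 x|)
                + (2:ℝ) ^ (-(β * (L:ℝ)))) := by
  have h21 : (1:ℝ) < 2 := one_lt_two
  set r : ℝ := (2:ℝ)^(-β) with hrdef
  have hr0 : 0 < r := Real.rpow_pos_of_pos (by norm_num) _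
  have hr1 : r < 1 := Real.rpow_lt_one_of_one_lt_of_neg h21 (by linarith)
  have h1r : 0 < 1 - r := by linarith
  refine ⟨2 + D + D/(1-r), by positivity, ?_⟩
  intro lam0 h0 L lam hm hV
  have h0i : IntegrableOn lam0 (Set.Icc (0:ℝ) 1) :=
    (holder_continuousOn hβ hD h0).integrableOn_Icc
  have h0i' : IntegrableOn lam0 (Set.Ioc (0:ℝ) 1) := h0i.mono_set Set.Ioc_subset_Icc_self
  have hfi : IntegrableOn (fun x => lam x - lam0 x) (Set.Ioc (0:ℝ) 1) :=
    (memV_integrableOn hm hV).sub h0i'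
  set Ni : ℝ := ∫ x in (0:ℝ)..1, |lam x - lam0 x| with hNidef
  have hNi0 : 0 ≤ Ni := by
    rw [hNidef, intervalIntegral.integral_of_le (by norm_num)]
    exact setIntegral_nonneg measurableSet_Ioc fun x _ => abs_nonneg _
  have hL0 : (0:ℝ) < (2:ℝ)^L := by positivity
  have hQ0 : (0:ℝ) < (2:ℝ)^(-(β*(L:ℝ))) := Real.rpow_pos_of_pos (by norm_num) _
  have hDr : 0 ≤ D/(1-r) := by positivity
  constructor
  · -- essential supremum bound
    have hb : ∀ x ∈ Set.Ioc (0:ℝ) 1, |lam x - lam0 x|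
        ≤ (2 + D + D/(1-r)) * ((2:ℝ)^L * Ni + (2:ℝ)^(-(β*(L:ℝ)))) := by
      intro x hx
      have hp := pointwise_bound hβ hD h0 h0i hm hV hx
      have e1 : ((2:ℝ)^(L+1))⁻¹ ^ β ≤ (2:ℝ)^(-(β*(L:ℝ))) := by
        have e0 : ((2:ℝ)^(L+1))⁻¹ = (2:ℝ)^(-(((L:ℝ))+1)) := by
          rw [Real.rpow_neg (by norm_num : (0:ℝ) ≤ 2), Real.rpow_add (by norm_num : (0:ℝ) < 2),
            Real.rpow_one, Real.rpow_natCast, pow_succ]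
        rw [e0, ← Real.rpow_mul (by norm_num : (0:ℝ) ≤ 2)]
        apply (Real.rpow_le_rpow_left_iff h21).mpr
        have hLc : (0:ℝ) ≤ (L:ℝ) := Nat.cast_nonneg L
        nlinarith
      have h3 : D * ((2:ℝ)^(L+1))⁻¹ ^ β ≤ D * (2:ℝ)^(-(β*(L:ℝ))) :=
        mul_le_mul_of_nonneg_left e1 hD.le
      have hfacts : 0 ≤ (2:ℝ)^L * Ni := mul_nonneg hL0.le hNi0
      have e2 : (2:ℝ)^(L+1) * Ni = 2 * ((2:ℝ)^L * Ni) := by ring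
      calc |lam x - lam0 x| ≤ (2:ℝ)^(L+1) * Ni + D * ((2:ℝ)^(L+1))⁻¹ ^ β := hp
        _ ≤ 2 * ((2:ℝ)^L * Ni) + D * (2:ℝ)^(-(β*(L:ℝ))) := by linarith
        _ ≤ (2 + D + D/(1-r)) * ((2:ℝ)^L * Ni + (2:ℝ)^(-(β*(L:ℝ)))) := by
            nlinarith [mul_nonneg hD.le hfacts, mul_nonneg hDr hfacts, mul_nonneg hDr hQ0.le,
              hQ0.le]
    have hae : (fun x => |lam x - lam0 x|) ≤ᵐ[volume.restrict (Set.Ioc (0:ℝ) 1)]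
        (fun _ => (2 + D + D/(1-r)) * ((2:ℝ)^L * Ni + (2:ℝ)^(-(β*(L:ℝ))))) :=
      (ae_restrict_iff' measurableSet_Ioc).2 (ae_of_all _ hb)
    haveI hne : (ae (volume.restrict (Set.Ioc (0:ℝ) 1))).NeBot := by
      rw [ae_neBot]
      intro hcon
      have := congrArg (fun μ : Measure ℝ => μ (Set.Ioc (0:ℝ) 1)) hcon
      simp [Measure.restrict_apply, Real.volume_Ioc] at this
    refine Filter.limsup_le_of_le ?_ hae
    exact Filter.IsBoundedUnder.isCoboundedUnder_le ⟨0, Filter.eventually_map.2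
      (ae_of_all _ fun x => abs_nonneg _)⟩
  · -- ellInfinity bound
    set a : ℕ → ℝ := fun l => (2:ℝ)^((l:ℝ)/2) *
      ⨆ k : Fin (2^l), |∫ x in (0:ℝ)..1, (lam x - lam0 x) * haarPsi l (k:ℕ) x| with hadef
    have hnonempty : ∀ l, Nonempty (Fin (2^l)) := fun l => ⟨⟨0, Nat.pow_pos (by norm_num)⟩⟩
    have ha0 : ∀ l, 0 ≤ a l := by
      intro l
      haveI := hnonempty l
      apply mul_nonneg (by positivity)
      have hle := le_ciSup (f := fun k : Fin (2^l) =>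
        |∫ x in (0:ℝ)..1, (lam x - lam0 x) * haarPsi l (k:ℕ) x|)
        (Set.Finite.bddAbove (Set.finite_range _)) (Classical.arbitrary _)
      exact le_trans (abs_nonneg _) hle
    have ha_low : ∀ l, a l ≤ (2:ℝ)^l * Ni := by
      intro l
      haveI := hnonempty l
      calc a l ≤ (2:ℝ)^((l:ℝ)/2) * ((2:ℝ)^((l:ℝ)/2) * Ni) := by
            apply mul_le_mul_of_nonneg_left _ (by positivity)
            exact ciSup_le fun k => low_freq_bound hfi l k
        _ = (2:ℝ)^l * Ni := by rw [← mul_assoc, rpow_half_sq]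
    have ha_high : ∀ l, L + 1 ≤ l → a l ≤ D * (2:ℝ)^(-(β*((l:ℝ)+1))) := by
      intro l hl
      haveI := hnonempty l
      have hstep : a l ≤ (2:ℝ)^((l:ℝ)/2) *
          ((2:ℝ)^((l:ℝ)/2) * (D * (1/(2*2^l)) ^ β * (1/(2*2^l)))) := by
        apply mul_le_mul_of_nonneg_left _ (by positivity)
        exact ciSup_le fun k => high_freq_bound hβ hD h0 h0i hm hV hl k.isLt
      have hhb : ((1:ℝ)/(2*2^l)) ^ β = (2:ℝ)^(-(β*((l:ℝ)+1))) := by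
        rw [h_eq_rpow l, ← Real.rpow_mul (by norm_num : (0:ℝ) ≤ 2)]
        congr 1
        ring
      calc a l ≤ (2:ℝ)^((l:ℝ)/2) * ((2:ℝ)^((l:ℝ)/2) * (D * (1/(2*2^l)) ^ β * (1/(2*2^l)))) := hstep
        _ = (2:ℝ)^l * (1/(2*2^l)) * (D * (1/(2*2^l)) ^ β) := by rw [← mul_assoc, rpow_half_sq]; ring
        _ = (1/2) * (D * (1/(2*2^l)) ^ β) := by
            have h12 : (2:ℝ)^l * (1/(2*2^l)) = 1/2 := by field_simp
            rw [h12]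
        _ ≤ 1 * (D * (1/(2*2^l)) ^ β) := by
            apply mul_le_mul_of_nonneg_right (by norm_num) (by positivity)
        _ = D * (2:ℝ)^(-(β*((l:ℝ)+1))) := by rw [one_mul, hhb]
    -- geometric majorant for the tail
    have hgeom : Summable (fun i : ℕ => D * (2:ℝ)^(-(β*((L:ℝ)+2))) * r^i) :=
      (summable_geometric_of_lt_one hr0.le hr1).mul_left _
    have htail_le : ∀ i : ℕ, a (i + (L+1)) ≤ D * (2:ℝ)^(-(β*((L:ℝ)+2))) * r^i := by
      intro i
      have h1 := ha_high (i + (L+1)) (by omega)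
      have e : (2:ℝ)^(-(β*(((i + (L+1) : ℕ):ℝ)+1))) = (2:ℝ)^(-(β*((L:ℝ)+2))) * r^i := by
        rw [hrdef, ← Real.rpow_natCast ((2:ℝ)^(-β)) i, ← Real.rpow_mul (by norm_num),
          ← Real.rpow_add (by norm_num)]
        congr 1
        push_cast
        ring
      calc a (i + (L+1)) ≤ D * (2:ℝ)^(-(β*((((i + (L+1) : ℕ)):ℝ)+1))) := h1
        _ = D * ((2:ℝ)^(-(β*((L:ℝ)+2))) * r^i) := by rw [e]
        _ = D * (2:ℝ)^(-(β*((L:ℝ)+2))) * r^i := by ring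
    have hsummable : Summable a := by
      rw [← summable_nat_add_iff (L+1)]
      exact Summable.of_nonneg_of_le (fun i => ha0 _) htail_le hgeom
    have hsplit := (hsummable.sum_add_tsum_nat_add (L+1)).symm
    have htailsum : ∑' i, a (i + (L+1)) ≤ D * (2:ℝ)^(-(β*((L:ℝ)+2))) * (1-r)⁻¹ := by
      calc ∑' i, a (i + (L+1)) ≤ ∑' i, D * (2:ℝ)^(-(β*((L:ℝ)+2))) * r^i :=
            Summable.tsum_le_tsum htail_le ((summable_nat_add_iff (L+1)).2 hsummable) hgeom
        _ = D * (2:ℝ)^(-(β*((L:ℝ)+2))) * (1-r)⁻¹ := by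
            rw [tsum_mul_left, tsum_geometric_of_lt_one hr0.le hr1]
    have hfinsum : ∑ i ∈ Finset.range (L+1), a i ≤ ((2:ℝ)^(L+1) - 1) * Ni := by
      calc ∑ i ∈ Finset.range (L+1), a i ≤ ∑ i ∈ Finset.range (L+1), (2:ℝ)^i * Ni :=
            Finset.sum_le_sum fun i _ => ha_low i
        _ = (∑ i ∈ Finset.range (L+1), (2:ℝ)^i) * Ni := by rw [Finset.sum_mul]
        _ = ((2:ℝ)^(L+1) - 1) * Ni := by
            rw [geom_sum_eq (by norm_num : (2:ℝ) ≠ 1)]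
            norm_num
    have htc : D * (2:ℝ)^(-(β*((L:ℝ)+2))) * (1-r)⁻¹ ≤ D/(1-r) * (2:ℝ)^(-(β*(L:ℝ))) := by
      have hmono : (2:ℝ)^(-(β*((L:ℝ)+2))) ≤ (2:ℝ)^(-(β*(L:ℝ))) := by
        apply (Real.rpow_le_rpow_left_iff h21).mpr
        have hLc : (0:ℝ) ≤ (L:ℝ) := Nat.cast_nonneg L
        nlinarith
      calc D * (2:ℝ)^(-(β*((L:ℝ)+2))) * (1-r)⁻¹ ≤ D * (2:ℝ)^(-(β*(L:ℝ))) * (1-r)⁻¹ := by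
            apply mul_le_mul_of_nonneg_right (mul_le_mul_of_nonneg_left hmono hD.le) (by positivity)
        _ = D/(1-r) * (2:ℝ)^(-(β*(L:ℝ))) := by rw [div_mul_eq_mul_div]; ring
    have hhead : |∫ x in (0:ℝ)..1, (lam x - lam0 x)| ≤ Ni :=
      intervalIntegral.abs_integral_le_integral_abs (by norm_num)
    have htsum_le : ∑' l, a l ≤ ((2:ℝ)^(L+1) - 1) * Ni + D/(1-r) * (2:ℝ)^(-(β*(L:ℝ))) := by
      rw [hsplit]
      have := htailsum.trans htc
      linarith
    show |∫ x in (0:ℝ)..1, (lam x - lam0 x)| + ∑' l, a l ≤ _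
    have hfacts : 0 ≤ (2:ℝ)^L * Ni := mul_nonneg hL0.le hNi0
    have e2 : ((2:ℝ)^(L+1) - 1) * Ni = 2 * ((2:ℝ)^L * Ni) - Ni := by ring
    calc |∫ x in (0:ℝ)..1, (lam x - lam0 x)| + ∑' l, a l
        ≤ Ni + (((2:ℝ)^(L+1) - 1) * Ni + D/(1-r) * (2:ℝ)^(-(β*(L:ℝ)))) := by linarith
      _ ≤ (2 + D + D/(1-r)) * ((2:ℝ)^L * Ni + (2:ℝ)^(-(β*(L:ℝ)))) := by
          have h2LNi : (1:ℝ) * Ni ≤ (2:ℝ)^L * Ni :=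
            mul_le_mul_of_nonneg_right (one_le_pow₀ (by norm_num)) hNi0
          nlinarith [mul_nonneg hD.le hfacts, mul_nonneg hDr hfacts, mul_nonneg hDr hQ0.le,
            mul_nonneg hD.le hQ0.le, hQ0.le]
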